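/- In a concept hierarchy with overlap bound o < r₁, and the 0/1-weight feed-forward network with threshold τ ≥ r₁k: if concept c' is shown at time t (i.e., exactly leaves(c') is presented) and c ≠ c' is another concept with level(c) = level(c'), then rep(c) does not fire at time t + level(c). -/
import Mathlib


open scoped Classical
noncomputable section

/-- A concept hierarchy: concepts at levels `0..L`, each concept at level `≥ 1`
has exactly `k` children one level below, level-0 concepts have no children,
there are exactly `k` top-level concepts, and every non-top concept has a parent. -/
structure ConceptHierarchy (α : Type) [DecidableEq α] where
  L : ℕ
  k : ℕ
  concepts : Finset α
  level : α → ℕ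
  children : α → Finset α
  level_le : ∀ c ∈ concepts, level c ≤ L
  children_mem : ∀ c ∈ concepts, ∀ c' ∈ children c, c' ∈ concepts
  children_level : ∀ c ∈ concepts, ∀ c' ∈ children c, level c' + 1 = level c
  children_card : ∀ c ∈ concepts, 1 ≤ level c → (children c).card = k
  children_leaf : ∀ c ∈ concepts, level c = 0 → children c = ∅
  top_card : (concepts.filter (fun c => level c = L)).card = k
  has_parent : ∀ c ∈ concepts, level c < L → ∃ c' ∈ concepts, c ∈ children c'

namespace ConceptHierarchy

variable {α : Type} [DecidableEq α]

/-- The parents of a concept. -/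
def parents (H : ConceptHierarchy α) (c : α) : Finset α :=
  H.concepts.filter (fun c' => c ∈ H.children c')

/-- Limited overlap: each concept at level `≥ 1` shares at most `o·k` children
with the union of the other concepts at the same level. -/
def LimitedOverlap (H : ConceptHierarchy α) (o : ℝ) : Prop :=
  ∀ c ∈ H.concepts, 1 ≤ H.level c →
    (((H.children c).filter (fun d => ∃ c' ∈ H.concepts, c' ≠ c ∧
        H.level c' = H.level c ∧ d ∈ H.children c')).card : ℝ) ≤ o * H.k

/-- Tree hierarchy: no overlap among child sets of distinct same-level concepts. -/
def IsTree (H : ConceptHierarchy α) : Prop :=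
  ∀ c ∈ H.concepts, ∀ c' ∈ H.concepts, H.level c = H.level c' → c ≠ c' →
    Disjoint (H.children c) (H.children c')

/-- Descendant relation: reflexive-transitive closure of the children relation. -/
inductive Desc (H : ConceptHierarchy α) : α → α → Prop
  | refl (c : α) : Desc H c c
  | step {c d e : α} : d ∈ H.children c → Desc H d e → Desc H c e

/-- The level-0 descendants of a concept. -/
def leaves (H : ConceptHierarchy α) (c : α) : Finset α :=
  H.concepts.filter (fun d => H.Desc c d ∧ H.level d = 0)

/-- Level-indexed bottom-up support sets: `S(0) = B ∩ C₀`,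
`S(ℓ) = {c at level ℓ : |children(c) ∩ S(ℓ-1)| ≥ r·k}`. -/
def suppL (H : ConceptHierarchy α) (r : ℝ) (B : Finset α) : ℕ → Finset α
  | 0 => B ∩ H.concepts.filter (fun c => H.level c = 0)
  | (ℓ+1) => H.concepts.filter (fun c => H.level c = ℓ + 1 ∧
      r * H.k ≤ ((H.children c ∩ suppL H r B ℓ).card : ℝ))

/-- `supp_r(B) = ⋃_ℓ S(ℓ)`. -/
def supp (H : ConceptHierarchy α) (r : ℝ) (B : Finset α) : Set α :=
  ⋃ ℓ, ↑(H.suppL r B ℓ)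

/-- Time-and-level-indexed support sets with feedback strength `f`:
`S(0,t) = B`; `S(ℓ,0) = ∅` for `ℓ ≥ 1`; and
`S(ℓ,t) = S(ℓ,t-1) ∪ {c at level ℓ : |children(c) ∩ S(ℓ-1,t-1)| + f·|parents(c) ∩ S(ℓ+1,t-1)| ≥ r·k}`. -/
def suppFB (H : ConceptHierarchy α) (r f : ℝ) (B : Finset α) : ℕ → ℕ → Finset α
  | 0, _ => B
  | (_+1), 0 => ∅
  | (ℓ+1), (t+1) => suppFB H r f B (ℓ+1) t ∪
      H.concepts.filter (fun c => H.level c = ℓ + 1 ∧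
        r * H.k ≤ ((H.children c ∩ suppFB H r f B ℓ t).card : ℝ) +
          f * ((H.parents c ∩ suppFB H r f B (ℓ+2) t).card : ℝ))
  termination_by ℓ t => t

/-- `supp_{r,f}(B,*,t) = ⋃_ℓ S(ℓ,t)`. -/
def suppFBatTime (H : ConceptHierarchy α) (r f : ℝ) (B : Finset α) (t : ℕ) : Set α :=
  ⋃ ℓ, ↑(H.suppFB r f B ℓ t)

/-- `supp_{r,f}(B) = ⋃_{ℓ,t} S(ℓ,t)`. -/
def suppFBSet (H : ConceptHierarchy α) (r f : ℝ) (B : Finset α) : Set α :=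
  ⋃ t, H.suppFBatTime r f B t

end ConceptHierarchy

/-- Feed-forward 0/1 weights: weight 1 from the rep of a child to the rep of its
parent, weight 0 otherwise. -/
def ffWeight {α ν : Type} [DecidableEq α] (H : ConceptHierarchy α) (rep : α → ν)
    (u v : ν) : ℝ :=
  if ∃ c ∈ H.concepts, ∃ c' ∈ H.children c, u = rep c' ∧ v = rep c then 1 else 0

/-- Feedback-network weights: weight 1 upward (rep of child to rep of parent),
weight `f` downward (rep of parent to rep of child), 0 otherwise. -/
def fbWeight {α ν : Type} [DecidableEq α] (H : ConceptHierarchy α) (rep : α → ν)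
    (f : ℝ) (u v : ν) : ℝ :=
  if ∃ c ∈ H.concepts, ∃ c' ∈ H.children c, u = rep c' ∧ v = rep c then 1
  else if ∃ c ∈ H.concepts, ∃ c' ∈ H.children c, u = rep c ∧ v = rep c' then f
  else 0

namespace ConceptHierarchy

variable {α : Type} [DecidableEq α]

lemma desc_mem (H : ConceptHierarchy α) {a b : α} (h : H.Desc a b)
    (ha : a ∈ H.concepts) : b ∈ H.concepts := by
  induction h with
  | refl => exact ha
  | step hch _ ih => exact ih (H.children_mem _ ha _ hch)

lemma desc_level_le (H : ConceptHierarchy α) {a b : α} (h : H.Desc a b)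
    (ha : a ∈ H.concepts) : H.level b ≤ H.level a := by
  induction h with
  | refl => exact le_rfl
  | step hch hd ih =>
    rename_i p d e
    have h1 := H.children_level _ ha _ hch
    have h2 := ih (H.children_mem _ ha _ hch)
    omega

lemma desc_ne_level_lt (H : ConceptHierarchy α) {a b : α} (h : H.Desc a b)
    (ha : a ∈ H.concepts) (hne : a ≠ b) : H.level b < H.level a := by
  cases h with
  | refl => exact absurd rfl hne
  | step hch hd =>
    rename_i d
    have h1 := H.children_level _ ha _ hch
    have h2 := H.desc_level_le hd (H.children_mem _ ha _ hch)
    omega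

lemma desc_parent (H : ConceptHierarchy α) {a b : α} (h : H.Desc a b)
    (hne : a ≠ b) : ∃ p, H.Desc a p ∧ b ∈ H.children p := by
  induction h with
  | refl => exact absurd rfl hne
  | step hch hd ih =>
    rename_i cc d e
    by_cases hde : d = e
    · subst hde
      exact ⟨cc, Desc.refl cc, hch⟩
    · obtain ⟨p, hp1, hp2⟩ := ih hde
      exact ⟨p, Desc.step hch hp1, hp2⟩

lemma exists_top (H : ConceptHierarchy α) :
    ∀ n c, c ∈ H.concepts → H.L - H.level c = n → ∃ d ∈ H.concepts, H.level d = H.L := by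
  intro n
  induction n with
  | zero =>
    intro c hc h
    have := H.level_le c hc
    exact ⟨c, hc, by omega⟩
  | succ n ih =>
    intro c hc h
    obtain ⟨p, hp, hcp⟩ := H.has_parent c hc (by have := H.level_le c hc; omega)
    have := H.children_level p hp c hcp
    exact ih p hp (by omega)

lemma k_pos (H : ConceptHierarchy α) {c : α} (hc : c ∈ H.concepts) : 1 ≤ H.k := by
  obtain ⟨d, hd, hdl⟩ := H.exists_top (H.L - H.level c) c hc rfl
  have hmem : d ∈ H.concepts.filter (fun c => H.level c = H.L) :=
    Finset.mem_filter.mpr ⟨hd, hdl⟩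
  have h1 := Finset.card_pos.mpr ⟨d, hmem⟩
  have h2 := H.top_card
  omega

end ConceptHierarchy

/-- with overlap bound `o < r₁` and threshold `τ ≥ r₁k`, showing a
concept `c'` (presenting exactly `leaves(c')`) does not make the rep of any other
concept `c` of the same level fire at its designated time `t + level(c)`. -/
theorem ff_overlap_no_false_recognition {α ν : Type} [DecidableEq α] [DecidableEq ν]
    [Fintype ν]
    (H : ConceptHierarchy α) (rep : α → ν) (layer : ν → ℕ)
    (hrep_inj : ∀ c ∈ H.concepts, ∀ c' ∈ H.concepts, rep c = rep c' → c = c')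
    (hrep_layer : ∀ c ∈ H.concepts, layer (rep c) = H.level c)
    (o r₁ τ : ℝ) (hO : H.LimitedOverlap o) (hor : o < r₁) (hτ : r₁ * H.k ≤ τ)
    (firing : ν → ℕ → Prop)
    (c c' : α) (hc : c ∈ H.concepts) (hc' : c' ∈ H.concepts) (hne : c ≠ c')
    (hlev : H.level c = H.level c') (t : ℕ)
    (hpres : ∀ u : ν, layer u = 0 → (firing u t ↔ ∃ b ∈ H.leaves c', u = rep b))
    (hdyn : ∀ u : ν, 1 ≤ layer u → ∀ s : ℕ, (firing u (s + 1) ↔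
        τ ≤ ∑ v ∈ Finset.univ.filter (fun v => layer v + 1 = layer u ∧ firing v s),
          ffWeight H rep v u)) :
    ¬ firing (rep c) (t + H.level c) := by
  have hkpos : 1 ≤ H.k := H.k_pos hc
  have key : ∀ ℓ : ℕ, ∀ d ∈ H.concepts, H.level d = ℓ → H.level d ≤ H.level c' →
      ¬ H.Desc c' d → ¬ firing (rep d) (t + ℓ) := by
    intro ℓ
    induction ℓ with
    | zero =>
      intro d hd hlevd _ hndesc hfire
      have hlay : layer (rep d) = 0 := by rw [hrep_layer d hd]; exact hlevd
      rw [Nat.add_zero, hpres (rep d) hlay] at hfire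
      obtain ⟨b, hb, hrb⟩ := hfire
      have hbmem : b ∈ H.concepts := (Finset.mem_filter.mp hb).1
      have hdb : d = b := hrep_inj d hd b hbmem hrb
      exact hndesc (hdb ▸ (Finset.mem_filter.mp hb).2.1)
    | succ ℓ ih =>
      intro d hd hlevd hdle hndesc hfire
      have hlay : layer (rep d) = ℓ + 1 := by rw [hrep_layer d hd]; exact hlevd
      rw [show t + (ℓ + 1) = (t + ℓ) + 1 from rfl,
        hdyn (rep d) (by omega) (t + ℓ)] at hfire
      set T := Finset.univ.filter (fun v => layer v + 1 = layer (rep d) ∧ firing v (t + ℓ))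
        with hT
      set O := (H.children d).filter (fun e => ∃ c'' ∈ H.concepts, c'' ≠ d ∧
        H.level c'' = H.level d ∧ e ∈ H.children c'') with hO'
      have hOcard : ((O : Finset α).card : ℝ) ≤ o * H.k := hO d hd (by omega)
      have hmemO : ∀ v ∈ T, ffWeight H rep v (rep d) ≤
          (if v ∈ O.image rep then (1 : ℝ) else 0) := by
        intro v hvT
        unfold ffWeight
        split_ifs with h1 h2
        · exact le_refl _
        · exfalso
          apply h2
          obtain ⟨p, hp, e, he, hve, hrdp⟩ := h1
          have hpd : d = p := hrep_inj d hd p hp hrdp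
          subst hpd
          have hemem : e ∈ H.concepts := H.children_mem d hd e he
          have helev : H.level e + 1 = H.level d := H.children_level d hd e he
          have hefire : firing v (t + ℓ) := by
            rw [hT, Finset.mem_filter] at hvT
            exact hvT.2.2
          have hdesc : H.Desc c' e := by
            by_contra hnd
            exact ih e hemem (by omega) (by omega) hnd (hve ▸ hefire)
          have hne' : c' ≠ e := by
            intro h
            subst h
            omega
          obtain ⟨q, hq1, hq2⟩ := H.desc_parent hdesc hne'
          have hqmem : q ∈ H.concepts := H.desc_mem hq1 hc'
          have hqlev : H.level e + 1 = H.level q := H.children_level q hqmem e hq2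
          have hqd : q ≠ d := by
            intro h
            exact hndesc (h ▸ hq1)
          have heO : e ∈ O := by
            rw [hO', Finset.mem_filter]
            exact ⟨he, q, hqmem, hqd, by omega, hq2⟩
          exact Finset.mem_image.mpr ⟨e, heO, hve.symm⟩
        · norm_num
        · exact le_refl _
      have hbound : ∑ v ∈ T, ffWeight H rep v (rep d) ≤ ((O.card : ℕ) : ℝ) := by
        calc ∑ v ∈ T, ffWeight H rep v (rep d)
            ≤ ∑ v ∈ T, (if v ∈ O.image rep then (1 : ℝ) else 0) :=
              Finset.sum_le_sum hmemO
          _ = ((T.filter (fun v => v ∈ O.image rep)).card : ℝ) := Finset.sum_boole _ T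
          _ ≤ (((O.image rep).card : ℕ) : ℝ) := by
              have hss : T.filter (fun v => v ∈ O.image rep) ⊆ O.image rep := by
                intro v hv
                exact (Finset.mem_filter.mp hv).2
              exact_mod_cast Finset.card_le_card hss
          _ ≤ ((O.card : ℕ) : ℝ) := by exact_mod_cast Finset.card_image_le
      have hlt : o * H.k < r₁ * H.k := by
        apply mul_lt_mul_of_pos_right hor
        exact_mod_cast Nat.lt_of_lt_of_le Nat.zero_lt_one hkpos
      have : τ ≤ o * H.k := by
        calc τ ≤ ∑ v ∈ T, ffWeight H rep v (rep d) := hfire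
        _ ≤ ((O.card : ℕ) : ℝ) := hbound
        _ ≤ o * H.k := hOcard
      linarith
  intro hfire
  have hndesc : ¬ H.Desc c' c := by
    intro h
    have := H.desc_ne_level_lt h hc' (Ne.symm hne)
    omega
  exact key (H.level c) c hc rfl (le_of_eq hlev) hndesc hfire
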